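/- Let M > 1 and 1 < a < 2, and define s(n) = ⌊(n − log₂(8M))/a⌋ and n̄ = ⌈a + log₂(8M)⌉. Then for every nonempty spin-flip collection γ and every integer n with n̄ ≤ n ≤ n₀(γ), |𝒾ₙ(γ)| ≤ (1/2)|𝒾_{s(n)}(γ)| + (1/2)|𝒾'_{s(n)}(γ)|. -/

import Mathlib

noncomputable section
open scoped Classical

/-! An integer `k : ℤ` encodes the dual-lattice site (spin flip) `k + 1/2 ∈ ℤ + 1/2`. -/

/-- Auxiliary greedy construction of the canonical cover (with fuel). -/
def coverAux (n : ℕ) : ℕ → Finset ℤ → Finset ℤ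
  | 0, _ => ∅
  | fuel + 1, γ =>
    if h : γ.Nonempty then
      insert (γ.min' h) (coverAux n fuel (γ.filter fun x => γ.min' h + 2 ^ n ≤ x))
    else ∅

/-- The left endpoints of the intervals of the canonical greedy cover `𝒾ₙ(γ)` of `γ` by
open intervals of diameter `2^n` with integer endpoints: `u` encodes `(u, u + 2^n)`. -/
def cover (n : ℕ) (γ : Finset ℤ) : Finset ℤ := coverAux n γ.card γ

/-- The diameter of `γ` (as a subset of `ℤ + 1/2`). -/
def diamZ (γ : Finset ℤ) : ℤ := WithBot.unbotD 0 γ.max - WithTop.untopD 0 γ.min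

/-- `n₀(γ) = ⌊log₂ diam γ⌋`. -/
def n0 (γ : Finset ℤ) : ℕ := Nat.log 2 (diamZ γ).toNat

/-- The isolated intervals `𝒾'ₙ(γ)`. -/
def isoCover (M a : ℝ) (n : ℕ) (γ : Finset ℤ) : Finset ℤ :=
  (cover n γ).filter fun u => ∀ u' ∈ cover n γ, u' ≠ u →
    2 * M * (2 : ℝ) ^ (a * n) ≤ |(u : ℝ) - (u' : ℝ)| - 2 ^ n

/-- The scale-connecting function `s(n) = ⌊(n − log₂(8M))/a⌋`. -/
def sM (M a : ℝ) (n : ℕ) : ℤ := ⌊((n : ℝ) - Real.logb 2 (8 * M)) / a⌋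

lemma coverAux_subset (n fuel : ℕ) (γ : Finset ℤ) : coverAux n fuel γ ⊆ γ := by
  induction fuel generalizing γ with
  | zero => simp [coverAux]
  | succ k ih =>
    intro u hu
    rw [coverAux] at hu
    split_ifs at hu with h
    · rcases Finset.mem_insert.1 hu with rfl | hu
      · exact γ.min'_mem h
      · exact Finset.filter_subset _ _ (ih _ hu)
    · simp at hu

lemma coverAux_covers (n : ℕ) : ∀ fuel (γ : Finset ℤ), γ.card ≤ fuel → ∀ x ∈ γ,
    ∃ u ∈ coverAux n fuel γ, u ≤ x ∧ x < u + 2 ^ n := by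
  intro fuel
  induction fuel with
  | zero =>
    intro γ hc x hx
    simp only [Nat.le_zero, Finset.card_eq_zero] at hc
    simp [hc] at hx
  | succ k ih =>
    intro γ hc x hx
    have h : γ.Nonempty := ⟨x, hx⟩
    rw [coverAux]; rw [dif_pos h]
    by_cases hlt : x < γ.min' h + 2 ^ n
    · exact ⟨γ.min' h, Finset.mem_insert_self _ _, γ.min'_le x hx, hlt⟩
    · push_neg at hlt
      have hxf : x ∈ γ.filter fun y => γ.min' h + 2 ^ n ≤ y := by
        simp [Finset.mem_filter, hx, hlt]
      have hsub : (γ.filter fun y => γ.min' h + 2 ^ n ≤ y) ⊆ γ.erase (γ.min' h) := by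
        intro y hy
        rw [Finset.mem_filter] at hy
        refine Finset.mem_erase.2 ⟨?_, hy.1⟩
        have : (0:ℤ) < 2 ^ n := by positivity
        omega
      have hcard : (γ.filter fun y => γ.min' h + 2 ^ n ≤ y).card ≤ k := by
        have := Finset.card_le_card hsub
        have h2 := Finset.card_erase_of_mem (γ.min'_mem h)
        omega
      obtain ⟨u, hu, h1, h2⟩ := ih _ hcard x hxf
      exact ⟨u, Finset.mem_insert_of_mem hu, h1, h2⟩

lemma coverAux_sep (n : ℕ) : ∀ fuel (γ : Finset ℤ), ∀ u ∈ coverAux n fuel γ,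
    ∀ v ∈ coverAux n fuel γ, u < v → u + 2 ^ n ≤ v := by
  intro fuel
  induction fuel with
  | zero => intro γ u hu; simp [coverAux] at hu
  | succ k ih =>
    intro γ u hu v hv huv
    rw [coverAux] at hu hv
    split_ifs at hu hv with h
    · have hmem : ∀ w ∈ coverAux n k (γ.filter fun x => γ.min' h + 2 ^ n ≤ x),
          γ.min' h + 2 ^ n ≤ w := by
        intro w hw
        have := coverAux_subset n k _ hw
        exact (Finset.mem_filter.1 this).2
      rcases Finset.mem_insert.1 hu with rfl | hu
      · rcases Finset.mem_insert.1 hv with rfl | hv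
        · omega
        · exact hmem v hv
      · rcases Finset.mem_insert.1 hv with rfl | hv
        · have := hmem u hu; omega
        · exact ih _ u hu v hv huv
    · simp at hu

lemma cover_subset (n : ℕ) (γ : Finset ℤ) : cover n γ ⊆ γ := coverAux_subset _ _ _

lemma cover_covers (n : ℕ) (γ : Finset ℤ) {x : ℤ} (hx : x ∈ γ) :
    ∃ u ∈ cover n γ, u ≤ x ∧ x < u + 2 ^ n := coverAux_covers n γ.card γ le_rfl x hx

lemma cover_sep (n : ℕ) (γ : Finset ℤ) {u v : ℤ} (hu : u ∈ cover n γ) (hv : v ∈ cover n γ)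
    (huv : u ≠ v) : 2 ^ n ≤ |u - v| := by
  rcases lt_or_gt_of_ne huv with h | h
  · have := coverAux_sep n γ.card γ u hu v hv h
    rw [abs_sub_comm, abs_of_nonneg (by omega)]; omega
  · have := coverAux_sep n γ.card γ v hv u hu h
    rw [abs_of_nonneg (by omega)]; omega

lemma count_aux {C D D' : Finset ℤ} (S : ℤ → Finset ℤ)
    (h1 : ∀ v ∈ C, S v ⊆ D)
    (h2 : ∀ v₁ ∈ C, ∀ v₂ ∈ C, v₁ ≠ v₂ → Disjoint (S v₁) (S v₂))
    (h3 : ∀ v ∈ C, 2 ≤ (S v).card + (S v ∩ D').card) :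
    2 * C.card ≤ D.card + D'.card := by
  classical
  have hb1 : (C.biUnion S).card = ∑ v ∈ C, (S v).card := Finset.card_biUnion h2
  have hb2 : (C.biUnion fun v => S v ∩ D').card = ∑ v ∈ C, (S v ∩ D').card :=
    Finset.card_biUnion fun v₁ h₁ v₂ h₂ hne =>
      (h2 v₁ h₁ v₂ h₂ hne).mono Finset.inter_subset_left Finset.inter_subset_left
  have hsub1 : C.biUnion S ⊆ D := Finset.biUnion_subset.2 h1
  have hsub2 : (C.biUnion fun v => S v ∩ D') ⊆ D' :=
    Finset.biUnion_subset.2 fun v _ => Finset.inter_subset_right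
  calc 2 * C.card = ∑ _v ∈ C, 2 := by rw [Finset.sum_const, smul_eq_mul, mul_comm]
    _ ≤ ∑ v ∈ C, ((S v).card + (S v ∩ D').card) := Finset.sum_le_sum h3
    _ = (C.biUnion S).card + (C.biUnion fun v => S v ∩ D').card := by
        rw [hb1, hb2, Finset.sum_add_distrib]
    _ ≤ D.card + D'.card :=
        add_le_add (Finset.card_le_card hsub1) (Finset.card_le_card hsub2)

/-- the recursive cover-size relation
`|𝒾ₙ(γ)| ≤ ½|𝒾_{s(n)}(γ)| + ½|𝒾'_{s(n)}(γ)|` for `n̄ ≤ n ≤ n₀(γ)`, where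
`n̄ = ⌈a + log₂(8M)⌉` (note `s(n) ≥ 1` in this range, so `(s n).toNat = s n`). -/
theorem cover_recursion (M a : ℝ) (hM : 1 < M) (ha1 : 1 < a) (ha2 : a < 2)
    (γ : Finset ℤ) (hne : γ.Nonempty) (heven : Even γ.card)
    (n : ℕ) (hn1 : (⌈a + Real.logb 2 (8 * M)⌉ : ℤ) ≤ (n : ℤ)) (hn2 : n ≤ n0 γ) :
    ((cover n γ).card : ℝ)
      ≤ 1 / 2 * ((cover (sM M a n).toNat γ).card : ℝ)
        + 1 / 2 * ((isoCover M a (sM M a n).toNat γ).card : ℝ) := by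
  classical
  set L := Real.logb 2 (8 * M) with hLdef
  set m : ℕ := (sM M a n).toNat with hmdef
  have hM8 : (0:ℝ) < 8 * M := by linarith
  have ha0 : (0:ℝ) < a := by linarith
  have hnL : a + L ≤ (n:ℝ) := by exact_mod_cast Int.ceil_le.1 hn1
  have hs1 : 1 ≤ sM M a n := by
    rw [sM]
    refine Int.le_floor.2 ?_
    push_cast
    rw [le_div_iff₀ ha0]
    linarith
  have hmZ : (m:ℤ) = sM M a n := Int.toNat_of_nonneg (by omega)
  have hmR : (m:ℝ) = ((sM M a n : ℤ) : ℝ) := by exact_mod_cast hmZ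
  set P : ℝ := (2:ℝ) ^ n with hPdef
  have hP0 : (0:ℝ) < P := by positivity
  have ham : a * (m:ℝ) ≤ (n:ℝ) - L := by
    have hfl : ((sM M a n : ℤ) : ℝ) ≤ ((n:ℝ) - L) / a := Int.floor_le _
    have := mul_le_mul_of_nonneg_left hfl (le_of_lt ha0)
    rw [mul_div_cancel₀ _ (ne_of_gt ha0)] at this
    rw [hmR]; linarith
  have hrpow : (2:ℝ) ^ (a * (m:ℝ)) ≤ P / (8 * M) := by
    have h1 : (2:ℝ) ^ (a * (m:ℝ)) ≤ (2:ℝ) ^ ((n:ℝ) - L) :=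
      Real.rpow_le_rpow_of_exponent_le one_le_two ham
    have h2 : (2:ℝ) ^ ((n:ℝ) - L) = P / (8 * M) := by
      rw [Real.rpow_sub (by norm_num), hLdef, Real.rpow_logb (by norm_num) (by norm_num) hM8,
        Real.rpow_natCast]
    linarith
  have hA : 2 * M * (2:ℝ) ^ (a * (m:ℝ)) ≤ P / 4 := by
    have := mul_le_mul_of_nonneg_left hrpow (by linarith : (0:ℝ) ≤ 2 * M)
    have heq : 2 * M * (P / (8 * M)) = P / 4 := by field_simp; ring
    linarith [heq ▸ this]
  have h2m : (2:ℝ) ^ m ≤ P / 8 := by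
    have h0 : (2:ℝ) ^ m = (2:ℝ) ^ ((m:ℕ):ℝ) := (Real.rpow_natCast 2 m).symm
    have h1 : ((m:ℕ):ℝ) ≤ a * m := by
      nlinarith [Nat.cast_nonneg (α := ℝ) m]
    have h2 : (2:ℝ) ^ ((m:ℕ):ℝ) ≤ (2:ℝ) ^ (a * (m:ℝ)) :=
      Real.rpow_le_rpow_of_exponent_le one_le_two h1
    have h3 : P / (8 * M) ≤ P / 8 :=
      div_le_div_of_nonneg_left (le_of_lt hP0) (by norm_num) (by linarith)
    calc (2:ℝ) ^ m = (2:ℝ) ^ ((m:ℕ):ℝ) := h0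
      _ ≤ (2:ℝ) ^ (a * (m:ℝ)) := h2
      _ ≤ P / (8 * M) := hrpow
      _ ≤ P / 8 := h3
  set C := cover n γ with hC
  set D := cover m γ with hD
  set D' := isoCover M a m γ with hD'
  have hexf : ∀ v, v ∈ C → ∃ u, u ∈ D ∧ u ≤ v ∧ v < u + 2 ^ m := by
    intro v hv
    obtain ⟨u, h1, h2, h3⟩ := cover_covers m γ (cover_subset n γ hv)
    exact ⟨u, h1, h2, h3⟩
  set f : ℤ → ℤ := fun v =>
    if h : ∃ u, u ∈ D ∧ u ≤ v ∧ v < u + 2 ^ m then h.choose else 0 with hfdef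
  have hfspec : ∀ v ∈ C, f v ∈ D ∧ f v ≤ v ∧ v < f v + 2 ^ m := by
    intro v hv
    have h := hexf v hv
    simp only [hfdef]
    rw [dif_pos h]
    exact h.choose_spec
  set S : ℤ → Finset ℤ := fun v =>
    if h : ∃ u', u' ∈ D ∧ u' ≠ f v ∧
        |((f v : ℤ) : ℝ) - (u' : ℝ)| - 2 ^ m < 2 * M * (2:ℝ) ^ (a * (m:ℝ))
    then {f v, h.choose} else {f v} with hSdef
  have hnear : ∀ v ∈ C, ∀ w ∈ S v, |(w:ℝ) - (v:ℝ)| < P / 2 := by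
    intro v hv w hw
    obtain ⟨hfD, hfle, hflt⟩ := hfspec v hv
    have hfv : |((f v : ℤ):ℝ) - (v:ℝ)| < P / 8 := by
      rw [abs_sub_comm, abs_of_nonneg (by exact_mod_cast sub_nonneg.2 hfle)]
      have h1 : ((v:ℝ) - (f v : ℤ)) < (2:ℝ)^m := by
        have : v - f v < 2 ^ m := by omega
        exact_mod_cast this
      linarith
    simp only [hSdef] at hw
    split_ifs at hw with h
    · rcases Finset.mem_insert.1 hw with rfl | hw
      · linarith
      · rw [Finset.mem_singleton] at hw
        subst hw
        obtain ⟨hD1, hne1, hlt1⟩ := h.choose_spec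
        have htri := abs_sub_le ((h.choose : ℤ):ℝ) ((f v : ℤ):ℝ) (v:ℝ)
        rw [abs_sub_comm ((h.choose : ℤ):ℝ) ((f v : ℤ):ℝ)] at htri
        linarith
    · rw [Finset.mem_singleton] at hw
      subst hw
      linarith
  have hdisj : ∀ v₁ ∈ C, ∀ v₂ ∈ C, v₁ ≠ v₂ → Disjoint (S v₁) (S v₂) := by
    intro v₁ h₁ v₂ h₂ hne12
    rw [Finset.disjoint_left]
    intro w hw1 hw2
    have d1 := hnear v₁ h₁ w hw1
    have d2 := hnear v₂ h₂ w hw2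
    have hsep : (2:ℤ)^n ≤ |v₁ - v₂| := cover_sep n γ h₁ h₂ hne12
    have hsepR : P ≤ |(v₁:ℝ) - (v₂:ℝ)| := by
      rw [hPdef]
      exact_mod_cast hsep
    have htri := abs_sub_le (v₁:ℝ) (w:ℝ) (v₂:ℝ)
    rw [abs_sub_comm (v₁:ℝ) (w:ℝ)] at htri
    linarith
  have hsub : ∀ v ∈ C, S v ⊆ D := by
    intro v hv w hw
    obtain ⟨hfD, -, -⟩ := hfspec v hv
    simp only [hSdef] at hw
    split_ifs at hw with h
    · rcases Finset.mem_insert.1 hw with rfl | hw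
      · exact hfD
      · rw [Finset.mem_singleton] at hw; subst hw; exact h.choose_spec.1
    · rw [Finset.mem_singleton] at hw; subst hw; exact hfD
  have htwo : ∀ v ∈ C, 2 ≤ (S v).card + (S v ∩ D').card := by
    intro v hv
    obtain ⟨hfD, -, -⟩ := hfspec v hv
    simp only [hSdef]
    split_ifs with h
    · have hcard : ({f v, h.choose} : Finset ℤ).card = 2 :=
        Finset.card_pair (Ne.symm h.choose_spec.2.1)
      omega
    · have hmem : f v ∈ D' := by
        rw [hD', isoCover, Finset.mem_filter]
        refine ⟨hfD, ?_⟩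
        intro u' hu' hneu
        by_contra hcon
        push_neg at hcon
        exact h ⟨u', hu', hneu, hcon⟩
      have heq : ({f v} : Finset ℤ) ∩ D' = {f v} := by
        rw [Finset.singleton_inter_of_mem hmem]
      rw [heq]
      simp
  have key : 2 * C.card ≤ D.card + D'.card := count_aux S hsub hdisj htwo
  have keyR : 2 * (C.card:ℝ) ≤ (D.card:ℝ) + (D'.card:ℝ) := by exact_mod_cast key
  linarith
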